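/- With the finite-horizon safety value V_T defined by V_0(z) = ℓ(z), V_{T+1}(z) = max_{a} min_{b ∈ B(z)} min{ ℓ(z), V_T(f(z,a,b)) }, the value equals the game outcome: V_T(z_0) = max over controller policies (as functions of history) min over adversary sequences of min_{0 ≤ t ≤ T} ℓ(z_t), where z_{t+1} = f(z_t, a_t, b_t). In particular, state-feedback (Markov) policies suffice to achieve the optimum. -/

import Mathlib

/-- Finite-horizon safety value:
`V 0 z = ℓ z`, `V (T+1) z = max_a min_{b ∈ Badm z} min (ℓ z) (V T (f z a b))`. -/
noncomputable def V {Z A B : Type*} [Fintype A] [Nonempty A]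
    (f : Z → A → B → Z) (Badm : Z → Finset B) (hB : ∀ z, (Badm z).Nonempty)
    (ℓ : Z → ℝ) : ℕ → Z → ℝ
  | 0, z => ℓ z
  | T + 1, z =>
    Finset.univ.sup' Finset.univ_nonempty fun a : A =>
      (Badm z).inf' (hB z) fun b => min (ℓ z) (V f Badm hB ℓ T (f z a b))

/-- History of states (most recent first) under a history-dependent policy
`π : List Z → A` and adversary sequence `b`. -/
def histList {Z A B : Type*} [Inhabited Z] (f : Z → A → B → Z)
    (π : List Z → A) (b : ℕ → B) (z0 : Z) : ℕ → List Z
  | 0 => [z0]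
  | t + 1 =>
    let h := histList f π b z0 t
    f h.headI (π h) (b t) :: h

/-- State at time `t` under a history-dependent policy. -/
def hstate {Z A B : Type*} [Inhabited Z] (f : Z → A → B → Z)
    (π : List Z → A) (b : ℕ → B) (z0 : Z) (t : ℕ) : Z :=
  (histList f π b z0 t).headI

/-- Closed-loop trajectory under a state-feedback (Markov) policy. -/
def traj {Z A B : Type*} (f : Z → A → B → Z) (π : Z → A) (b : ℕ → B) (z0 : Z) : ℕ → Z
  | 0 => z0
  | t + 1 => f (traj f π b z0 t) (π (traj f π b z0 t)) (b t)

section Aux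
variable {Z A B : Type*} [Fintype A] [Nonempty A]
  (f : Z → A → B → Z) (Badm : Z → Finset B) (hB : ∀ z, (Badm z).Nonempty) (ℓ : Z → ℝ)

lemma V_zero (z : Z) : V f Badm hB ℓ 0 z = ℓ z := rfl

lemma V_succ (T : ℕ) (z : Z) : V f Badm hB ℓ (T+1) z =
    Finset.univ.sup' Finset.univ_nonempty (fun a : A =>
      (Badm z).inf' (hB z) fun b => min (ℓ z) (V f Badm hB ℓ T (f z a b))) := rfl

lemma V_le_ell : ∀ (k : ℕ) (z : Z), V f Badm hB ℓ k z ≤ ℓ z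
  | 0, _ => le_refl _
  | k+1, z => by
    rw [V_succ]
    apply Finset.sup'_le
    intro a _
    obtain ⟨b, hb⟩ := hB z
    exact le_trans (Finset.inf'_le _ hb) (min_le_left _ _)

lemma V_succ_le : ∀ (k : ℕ) (z : Z), V f Badm hB ℓ (k+1) z ≤ V f Badm hB ℓ k z
  | 0, z => V_le_ell f Badm hB ℓ 1 z
  | k+1, z => by
    rw [V_succ, V_succ]
    apply Finset.sup'_le
    intro a ha
    refine le_trans ?_ (Finset.le_sup' _ ha)
    apply Finset.le_inf'
    intro b hb
    exact le_trans (Finset.inf'_le _ hb) (min_le_min le_rfl (V_succ_le k (f z a b)))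

lemma V_mono {j k : ℕ} (h : j ≤ k) (z : Z) :
    V f Badm hB ℓ k z ≤ V f Badm hB ℓ j z := by
  induction h with
  | refl => exact le_refl _
  | step h ih => exact le_trans (V_succ_le f Badm hB ℓ _ z) ih

omit [Fintype A] [Nonempty A] in
lemma hstate_lift [Inhabited Z] (σ : Z → A) (b : ℕ → B) (z0 : Z) :
    ∀ t, hstate f (fun h => σ h.headI) b z0 t = traj f σ b z0 t := by
  intro t
  induction t with
  | zero => rfl
  | succ t ih =>
    show f (histList f (fun h => σ h.headI) b z0 t).headI
        (σ (histList f (fun h => σ h.headI) b z0 t).headI) (b t) = _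
    rw [show (histList f (fun h => σ h.headI) b z0 t).headI
        = hstate f (fun h => σ h.headI) b z0 t from rfl, ih]
    rfl

end Aux

/-- The finite-horizon safety value equals the max–min game outcome
`min_{0 ≤ t ≤ T} ℓ(z_t)` over history-dependent policies and admissible
adversary sequences; moreover state-feedback (Markov) policies suffice. -/
theorem value_equals_game_outcome {Z A B : Type*} [Inhabited Z] [Fintype A] [Nonempty A]
    (f : Z → A → B → Z) (Badm : Z → Finset B) (hB : ∀ z, (Badm z).Nonempty)
    (ℓ : Z → ℝ) (T : ℕ) (z0 : Z) :
    (∃ π : List Z → A, ∀ b : ℕ → B,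
      (∀ t, b t ∈ Badm (hstate f π b z0 t)) →
      V f Badm hB ℓ T z0 ≤
        (Finset.range (T + 1)).inf' Finset.nonempty_range_add_one
          (fun t => ℓ (hstate f π b z0 t))) ∧
    (∀ π : List Z → A, ∃ b : ℕ → B,
      (∀ t, b t ∈ Badm (hstate f π b z0 t)) ∧
      (Finset.range (T + 1)).inf' Finset.nonempty_range_add_one
          (fun t => ℓ (hstate f π b z0 t)) ≤ V f Badm hB ℓ T z0) ∧
    (∃ π : Z → A, ∀ b : ℕ → B,
      (∀ t, b t ∈ Badm (traj f π b z0 t)) →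
      V f Badm hB ℓ T z0 ≤
        (Finset.range (T + 1)).inf' Finset.nonempty_range_add_one
          (fun t => ℓ (traj f π b z0 t))) := by
  classical
  set c := V f Badm hB ℓ T z0 with hc
  -- optimal one-step actions at each horizon
  have habest : ∀ (z : Z) (k : ℕ), ∃ a : A, V f Badm hB ℓ (k+1) z =
      (Badm z).inf' (hB z) (fun b => min (ℓ z) (V f Badm hB ℓ k (f z a b))) := by
    intro z k
    obtain ⟨a, -, ha⟩ := Finset.exists_mem_eq_sup' (Finset.univ_nonempty (α := A))
      (fun a : A => (Badm z).inf' (hB z) fun b => min (ℓ z) (V f Badm hB ℓ k (f z a b)))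
    exact ⟨a, ha⟩
  choose abest hab using habest
  set m : Z → ℕ := fun z => Nat.findGreatest (fun k => c ≤ V f Badm hB ℓ k z) T with hm
  set πopt : Z → A := fun z => abest z (m z - 1) with hπopt
  -- Part 3 : Markov policy achieves the value
  have part3 : ∀ b : ℕ → B, (∀ t, b t ∈ Badm (traj f πopt b z0 t)) →
      c ≤ (Finset.range (T + 1)).inf' Finset.nonempty_range_add_one
        (fun t => ℓ (traj f πopt b z0 t)) := by
    intro b hb
    have key : ∀ t, t ≤ T → c ≤ V f Badm hB ℓ (T - t) (traj f πopt b z0 t) := by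
      intro t
      induction t with
      | zero => intro _; exact le_refl _
      | succ t ih =>
        intro ht
        have ht' : t ≤ T := by omega
        have h1 : c ≤ V f Badm hB ℓ (T - t) (traj f πopt b z0 t) := ih ht'
        set z := traj f πopt b z0 t with hz
        have hmz : T - t ≤ m z := Nat.le_findGreatest (Nat.sub_le T t) h1
        have hm1 : 1 ≤ m z := le_trans (by omega) hmz
        have hP : c ≤ V f Badm hB ℓ (m z) z :=
          Nat.findGreatest_spec (P := fun k => c ≤ V f Badm hB ℓ k z) (Nat.sub_le T t) h1
        have hmz1 : m z - 1 + 1 = m z := by omega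
        have heq := hab z (m z - 1)
        rw [hmz1] at heq
        have h2 : c ≤ min (ℓ z) (V f Badm hB ℓ (m z - 1) (f z (πopt z) (b t))) := by
          calc c ≤ V f Badm hB ℓ (m z) z := hP
            _ = _ := heq
            _ ≤ _ := Finset.inf'_le _ (hb t)
        have h3 : c ≤ V f Badm hB ℓ (m z - 1) (traj f πopt b z0 (t+1)) := by
          show c ≤ V f Badm hB ℓ (m z - 1) (f z (πopt z) (b t))
          exact le_trans h2 (min_le_right _ _)
        exact le_trans h3 (V_mono f Badm hB ℓ (by omega) _)
    apply Finset.le_inf'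
    intro t ht
    have ht' : t ≤ T := by
      have := Finset.mem_range.mp ht; omega
    exact le_trans (key t ht') (V_le_ell f Badm hB ℓ _ _)
  refine ⟨?_, ?_, ⟨πopt, part3⟩⟩
  · -- Part 1 from Part 3
    refine ⟨fun h => πopt h.headI, ?_⟩
    intro b hb
    have hE := hstate_lift f (B := B) πopt b z0
    simp only [hE] at hb ⊢
    exact part3 b hb
  · -- Part 2 : adversary against an arbitrary history policy
    intro π
    have hcbE : ∀ (h : List Z) (t : ℕ), ∃ bb, bb ∈ Badm h.headI ∧
        (Badm h.headI).inf' (hB h.headI)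
          (fun bb => min (ℓ h.headI) (V f Badm hB ℓ (T - (t+1)) (f h.headI (π h) bb)))
        = min (ℓ h.headI) (V f Badm hB ℓ (T - (t+1)) (f h.headI (π h) bb)) :=
      fun h t => Finset.exists_mem_eq_inf' (hB h.headI) _
    choose cb hcb1 hcb2 using hcbE
    set advH : ℕ → List Z :=
      fun t => Nat.rec [z0] (fun t h => f h.headI (π h) (cb h t) :: h) t with hadvH
    set advb : ℕ → B := fun t => cb (advH t) t with hadvb
    have hHist : ∀ t, histList f π advb z0 t = advH t := by
      intro t
      induction t with
      | zero => rfl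
      | succ t ih =>
        show f (histList f π advb z0 t).headI (π (histList f π advb z0 t)) (advb t)
            :: histList f π advb z0 t = _
        rw [ih]
    have hs : ∀ t, hstate f π advb z0 t = (advH t).headI := by
      intro t; rw [hstate, hHist]
    have hadm : ∀ t, advb t ∈ Badm (hstate f π advb z0 t) := by
      intro t
      rw [hs t]
      exact hcb1 (advH t) t
    refine ⟨advb, hadm, ?_⟩
    have inv : ∀ t, t ≤ T → ∀ x : ℝ,
        (∀ s, s < t → x ≤ ℓ (hstate f π advb z0 s)) →
        x ≤ V f Badm hB ℓ (T - t) (hstate f π advb z0 t) → x ≤ c := by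
      intro t
      induction t with
      | zero => intro _ x _ hx; exact hx
      | succ t ih =>
        intro ht x hℓx hx
        have ht' : t ≤ T := by omega
        apply ih ht' x (fun s hs' => hℓx s (by omega))
        have hstep : hstate f π advb z0 (t+1)
            = f (advH t).headI (π (advH t)) (cb (advH t) t) := by
          rw [hstate, hHist]
          rfl
        have hxm : x ≤ min (ℓ ((advH t).headI))
            (V f Badm hB ℓ (T - (t+1)) (f (advH t).headI (π (advH t)) (cb (advH t) t))) := by
          refine le_min ?_ ?_
          · have := hℓx t (by omega)
            rwa [hs t] at this
          · rwa [hstep] at hx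
        have hxinf : x ≤ (Badm (advH t).headI).inf' (hB (advH t).headI)
            (fun bb => min (ℓ (advH t).headI)
              (V f Badm hB ℓ (T - (t+1)) (f (advH t).headI (π (advH t)) bb))) := by
          rw [hcb2 (advH t) t]
          exact hxm
        have hTt : T - t = (T - (t+1)) + 1 := by omega
        rw [hs t, hTt, V_succ]
        exact le_trans hxinf (Finset.le_sup'
          (fun a : A => (Badm (advH t).headI).inf' (hB (advH t).headI)
            fun bb => min (ℓ (advH t).headI)
              (V f Badm hB ℓ (T - (t+1)) (f (advH t).headI a bb)))
          (Finset.mem_univ (π (advH t))))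
    apply inv T le_rfl
    · intro s hs'
      exact Finset.inf'_le _ (Finset.mem_range.mpr (by omega))
    · rw [Nat.sub_self]
      exact Finset.inf'_le _ (Finset.mem_range.mpr (by omega))
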